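/- For every prime p and every integer n ≥ 1: (i) g_n(p^e) = 0 for all e with 0 ≤ e < n−1; (ii) g_{n+1}(p^n) = 1; and (iii) g_n(p^n) = (p^{n−1} − 1)/(p − 1). -/

import Mathlib

open scoped BigOperators

/-- The number of subrings with identity of `ℤ^n` (componentwise operations)
of additive index `k`. -/
noncomputable def numSubrings (n k : ℕ) : ℕ :=
  Nat.card {S : Subring (Fin n → ℤ) // S.toAddSubgroup.index = k}

/-- The number of irreducible subrings of `ℤ^n` of index `p ^ e`: subrings of
additive index `p ^ e` all of whose elements have all coordinates congruent
modulo `p`. -/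
noncomputable def numIrrSubrings (n p e : ℕ) : ℕ :=
  Nat.card {S : Subring (Fin n → ℤ) //
    S.toAddSubgroup.index = p ^ e ∧
    ∀ x ∈ S, ∀ i j : Fin n, (p : ℤ) ∣ x i - x j}

/-- An integer matrix is in Hermite normal form if it is upper triangular and
`0 ≤ a i j < a i i` for `i < j`. -/
def IsHermiteNormalForm {n : ℕ} (A : Matrix (Fin n) (Fin n) ℤ) : Prop :=
  (∀ i j : Fin n, j < i → A i j = 0) ∧
  ∀ i j : Fin n, i < j → 0 ≤ A i j ∧ A i j < A i i

/-- A subring matrix is a matrix in Hermite normal form such that the all-ones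
vector lies in the ℤ-span of its columns and the componentwise product of any
two columns lies in the ℤ-span of its columns. -/
def IsSubringMatrix {n : ℕ} (A : Matrix (Fin n) (Fin n) ℤ) : Prop :=
  IsHermiteNormalForm A ∧
  (1 : Fin n → ℤ) ∈ Set.range A.mulVec ∧
  ∀ j k : Fin n, (fun i => A i j * A i k) ∈ Set.range A.mulVec

/-- For a composition `α` of length `m`, the number of `(m+1) × (m+1)` subring
matrices with diagonal `(p ^ α 0, …, p ^ α (m-1), 1)`, all entries of the first
`m` columns divisible by `p`, and last column `(1,…,1)ᵀ`. -/
noncomputable def gComp (p : ℕ) {m : ℕ} (α : Fin m → ℕ) : ℕ :=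
  Nat.card {A : Matrix (Fin (m + 1)) (Fin (m + 1)) ℤ //
    IsSubringMatrix A ∧
    (∀ i : Fin m, A i.castSucc i.castSucc = (p : ℤ) ^ α i) ∧
    (∀ i : Fin (m + 1), ∀ j : Fin m, (p : ℤ) ∣ A i j.castSucc) ∧
    ∀ i : Fin (m + 1), A i (Fin.last m) = 1}

section Aux

/-- index of kernel of a surjective additive hom equals the cardinality of the codomain. -/
lemma index_ker_of_surj {G H : Type*} [AddCommGroup G] [AddCommGroup H] (f : G →+ H)
    (hf : Function.Surjective f) : f.ker.index = Nat.card H := by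
  rw [AddSubgroup.index_ker]
  exact Nat.card_congr (Equiv.subtypeUnivEquiv fun x => by
    obtain ⟨y, rfl⟩ := hf x; exact ⟨y, rfl⟩)

lemma addSubgroup_eq_of_le_of_index_eq {G : Type*} [AddCommGroup G] {H K : AddSubgroup G}
    (h : H ≤ K) (heq : H.index = K.index) (h0 : K.index ≠ 0) : H = K := by
  have hm := AddSubgroup.relIndex_mul_index h
  rw [heq] at hm
  have h1 : H.relIndex K = 1 :=
    Nat.eq_of_mul_eq_mul_right (Nat.pos_of_ne_zero h0) (by rw [hm, one_mul])
  exact le_antisymm h (AddSubgroup.relIndex_eq_one.mp h1)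

variable (p : ℕ)

/-- The "diagonal" subring of `ℤ^n`. -/
def diagSR (n : ℕ) : Subring (Fin n → ℤ) where
  carrier := {x | ∀ i j : Fin n, (p : ℤ) ∣ x i - x j}
  zero_mem' := by intro i j; simp
  one_mem' := by intro i j; simp
  add_mem' := by
    intro a b ha hb i j
    have h : (a + b) i - (a + b) j = (a i - a j) + (b i - b j) := by
      simp only [Pi.add_apply]; ring
    rw [h]; exact dvd_add (ha i j) (hb i j)
  neg_mem' := by
    intro a ha i j
    have h : (-a) i - (-a) j = -(a i - a j) := by simp only [Pi.neg_apply]; ring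
    rw [h]; exact (ha i j).neg_right
  mul_mem' := by
    intro a b ha hb i j
    have h : (a * b) i - (a * b) j = a i * (b i - b j) + (a i - a j) * b j := by
      simp only [Pi.mul_apply]; ring
    rw [h]; exact dvd_add ((hb i j).mul_left _) ((ha i j).mul_right _)

lemma mem_diagSR {n : ℕ} {x : Fin n → ℤ} :
    x ∈ diagSR p n ↔ ∀ i j : Fin n, (p : ℤ) ∣ x i - x j := Iff.rfl

/-- reduction mod p of the differences -/
def psiHom (m : ℕ) : (Fin (m + 1) → ℤ) →+ (Fin m → ZMod p) where
  toFun x := fun i => ((x i.succ - x 0 : ℤ) : ZMod p)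
  map_zero' := by funext i; simp
  map_add' x y := by funext i; simp only [Pi.add_apply]; push_cast; ring

lemma psi_ker (m : ℕ) : (psiHom p m).ker = (diagSR p (m + 1)).toAddSubgroup := by
  ext x
  simp only [AddMonoidHom.mem_ker, psiHom, AddMonoidHom.coe_mk, ZeroHom.coe_mk, funext_iff,
    Pi.zero_apply, ZMod.intCast_zmod_eq_zero_iff_dvd, Subring.mem_toAddSubgroup, mem_diagSR]
  constructor
  · intro h i j
    have key : ∀ i : Fin (m + 1), (p : ℤ) ∣ x i - x 0 := by
      intro i
      induction i using Fin.cases with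
      | zero => simp
      | succ k => exact h k
    have : x i - x j = (x i - x 0) - (x j - x 0) := by ring
    rw [this]; exact dvd_sub (key i) (key j)
  · intro h i
    exact h i.succ 0

lemma psi_surj [NeZero p] (m : ℕ) : Function.Surjective (psiHom p m) := by
  intro c
  refine ⟨fun i => Fin.cases 0 (fun k => ((c k).val : ℤ)) i, ?_⟩
  funext i
  simp only [psiHom, AddMonoidHom.coe_mk, ZeroHom.coe_mk, Fin.cases_succ, Fin.cases_zero,
    sub_zero, Int.cast_natCast]
  exact ZMod.natCast_rightInverse (c i)

lemma diagSR_index [NeZero p] (m : ℕ) : (diagSR p (m + 1)).toAddSubgroup.index = p ^ m := by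
  rw [← psi_ker, index_ker_of_surj _ (psi_surj p m)]
  simp [Nat.card_pi, Nat.card_zmod]

end Aux

section Core

def bfun (p m : ℕ) (x : Fin (m + 1) → ℤ) : Fin m → ZMod p :=
  fun i => (((x i.succ - x 0) / (p : ℤ) : ℤ) : ZMod p)

def lfun {p m : ℕ} (c v : Fin m → ZMod p) : ZMod p := ∑ i, c i * v i

def vfun (p : ℕ) {m : ℕ} (c : Fin m → ZMod p) (x : Fin (m + 1) → ℤ) : ZMod p :=
  lfun c (bfun p m x)

variable {p : ℕ}

lemma exact_div {a b : ℤ} (hp0 : (p : ℤ) ≠ 0) (h : a = p * b) : a / (p : ℤ) = b := by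
  rw [h, Int.mul_ediv_cancel_left _ hp0]

lemma bfun_add (hp0 : (p : ℤ) ≠ 0) {m : ℕ} {x y : Fin (m + 1) → ℤ}
    (hx : x ∈ diagSR p (m + 1)) (hy : y ∈ diagSR p (m + 1)) :
    bfun p m (x + y) = bfun p m x + bfun p m y := by
  funext i
  obtain ⟨a, ha⟩ := hx i.succ 0
  obtain ⟨b, hb⟩ := hy i.succ 0
  have e3 : (x + y) i.succ - (x + y) 0 = (p : ℤ) * (a + b) := by
    simp only [Pi.add_apply]; linarith
  simp only [bfun, Pi.add_apply]
  rw [exact_div hp0 ha, exact_div hp0 hb]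
  rw [show x i.succ + y i.succ - (x 0 + y 0) = (p : ℤ) * (a + b) by linarith,
    Int.mul_ediv_cancel_left _ hp0]
  push_cast; ring

lemma bfun_neg (hp0 : (p : ℤ) ≠ 0) {m : ℕ} {x : Fin (m + 1) → ℤ}
    (hx : x ∈ diagSR p (m + 1)) : bfun p m (-x) = -bfun p m x := by
  funext i
  obtain ⟨a, ha⟩ := hx i.succ 0
  simp only [bfun, Pi.neg_apply]
  rw [exact_div hp0 ha,
    show -x i.succ - -x 0 = (p : ℤ) * (-a) by linarith, Int.mul_ediv_cancel_left _ hp0]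
  push_cast; ring

@[simp] lemma bfun_zero {m : ℕ} : bfun p m 0 = 0 := by
  funext i; simp [bfun]

@[simp] lemma bfun_one {m : ℕ} : bfun p m 1 = 0 := by
  funext i; simp [bfun]

lemma bfun_mul (hp0 : (p : ℤ) ≠ 0) {m : ℕ} {x y : Fin (m + 1) → ℤ}
    (hx : x ∈ diagSR p (m + 1)) (hy : y ∈ diagSR p (m + 1)) (i : Fin m) :
    bfun p m (x * y) i = (x 0 : ZMod p) * bfun p m y i + (y 0 : ZMod p) * bfun p m x i := by
  obtain ⟨a, ha⟩ := hx i.succ 0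
  obtain ⟨b, hb⟩ := hy i.succ 0
  simp only [bfun, Pi.mul_apply]
  rw [exact_div hp0 ha, exact_div hp0 hb,
    show x i.succ * y i.succ - x 0 * y 0 = (p : ℤ) * (x 0 * b + y 0 * a + p * (a * b)) by
      linear_combination (y i.succ) * ha + (x 0) * hb + ((p : ℤ) * a) * hb,
    Int.mul_ediv_cancel_left _ hp0]
  push_cast
  simp [ZMod.natCast_self]

lemma vfun_add (hp0 : (p : ℤ) ≠ 0) {m : ℕ} {c : Fin m → ZMod p} {x y : Fin (m + 1) → ℤ}
    (hx : x ∈ diagSR p (m + 1)) (hy : y ∈ diagSR p (m + 1)) :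
    vfun p c (x + y) = vfun p c x + vfun p c y := by
  unfold vfun lfun
  rw [bfun_add hp0 hx hy, ← Finset.sum_add_distrib]
  exact Finset.sum_congr rfl fun i _ => by simp [mul_add]

lemma vfun_neg (hp0 : (p : ℤ) ≠ 0) {m : ℕ} {c : Fin m → ZMod p} {x : Fin (m + 1) → ℤ}
    (hx : x ∈ diagSR p (m + 1)) : vfun p c (-x) = -vfun p c x := by
  unfold vfun lfun
  rw [bfun_neg hp0 hx, ← Finset.sum_neg_distrib]
  exact Finset.sum_congr rfl fun i _ => by simp [mul_neg]

lemma vfun_mul (hp0 : (p : ℤ) ≠ 0) {m : ℕ} {c : Fin m → ZMod p} {x y : Fin (m + 1) → ℤ}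
    (hx : x ∈ diagSR p (m + 1)) (hy : y ∈ diagSR p (m + 1)) :
    vfun p c (x * y) = (x 0 : ZMod p) * vfun p c y + (y 0 : ZMod p) * vfun p c x := by
  unfold vfun lfun
  rw [Finset.mul_sum, Finset.mul_sum, ← Finset.sum_add_distrib]
  refine Finset.sum_congr rfl fun i _ => ?_
  rw [bfun_mul hp0 hx hy i]
  ring

@[simp] lemma vfun_zero {m : ℕ} {c : Fin m → ZMod p} : vfun p c 0 = 0 := by
  simp [vfun, lfun]

@[simp] lemma vfun_one {m : ℕ} {c : Fin m → ZMod p} : vfun p c 1 = 0 := by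
  simp [vfun, lfun]

variable (p)

/-- The subring attached to a vector `c`. -/
def Sring (hp0 : (p : ℤ) ≠ 0) (m : ℕ) (c : Fin m → ZMod p) : Subring (Fin (m + 1) → ℤ) where
  carrier := {x | x ∈ diagSR p (m + 1) ∧ vfun p c x = 0}
  zero_mem' := ⟨zero_mem _, vfun_zero⟩
  one_mem' := ⟨one_mem _, vfun_one⟩
  add_mem' := by
    rintro a b ⟨ha, ha0⟩ ⟨hb, hb0⟩
    exact ⟨add_mem ha hb, by rw [vfun_add hp0 ha hb, ha0, hb0, add_zero]⟩
  neg_mem' := by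
    rintro a ⟨ha, ha0⟩
    exact ⟨neg_mem ha, by rw [vfun_neg hp0 ha, ha0, neg_zero]⟩
  mul_mem' := by
    rintro a b ⟨ha, ha0⟩ ⟨hb, hb0⟩
    exact ⟨mul_mem ha hb, by rw [vfun_mul hp0 ha hb, ha0, hb0, mul_zero, mul_zero, add_zero]⟩

variable {p}

lemma mem_Sring {hp0 : (p : ℤ) ≠ 0} {m : ℕ} {c : Fin m → ZMod p} {x : Fin (m + 1) → ℤ} :
    x ∈ Sring p hp0 m c ↔ x ∈ diagSR p (m + 1) ∧ vfun p c x = 0 := Iff.rfl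

end Core

section Index

variable (p : ℕ)

def xvec {m : ℕ} (v : Fin m → ZMod p) : Fin (m + 1) → ℤ :=
  fun i => Fin.cases 0 (fun k => (p : ℤ) * ((v k).val : ℤ)) i

variable {p}

lemma xvec_mem {m : ℕ} {v : Fin m → ZMod p} : xvec p v ∈ diagSR p (m + 1) := by
  intro i j
  have h : ∀ i, (p : ℤ) ∣ xvec p v i := by
    intro i
    induction i using Fin.cases with
    | zero => simp [xvec]
    | succ k => exact ⟨((v k).val : ℤ), rfl⟩
  exact dvd_sub (h i) (h j)

lemma bfun_xvec [NeZero p] (hp0 : (p : ℤ) ≠ 0) {m : ℕ} (v : Fin m → ZMod p) :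
    bfun p m (xvec p v) = v := by
  funext i
  simp only [bfun, xvec, Fin.cases_succ, Fin.cases_zero, sub_zero]
  rw [Int.mul_ediv_cancel_left _ hp0]
  rw [Int.cast_natCast]
  exact ZMod.natCast_rightInverse (v i)

lemma vfun_xvec [NeZero p] (hp0 : (p : ℤ) ≠ 0) {m : ℕ} (c v : Fin m → ZMod p) :
    vfun p c (xvec p v) = lfun c v := by
  rw [vfun, bfun_xvec hp0]

/-- `bfun` as an additive hom on the diagonal subring. -/
def rhoHom (hp0 : (p : ℤ) ≠ 0) (m : ℕ) :
    (diagSR p (m + 1)).toAddSubgroup →+ (Fin m → ZMod p) where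
  toFun x := bfun p m x.1
  map_zero' := bfun_zero
  map_add' x y := bfun_add hp0 x.2 y.2

/-- the linear functional on the diagonal subring attached to `c`. -/
def chiHom (hp0 : (p : ℤ) ≠ 0) (m : ℕ) (c : Fin m → ZMod p) :
    (diagSR p (m + 1)).toAddSubgroup →+ ZMod p where
  toFun x := vfun p c x.1
  map_zero' := vfun_zero
  map_add' x y := vfun_add hp0 x.2 y.2

lemma rho_surj [NeZero p] (hp0 : (p : ℤ) ≠ 0) (m : ℕ) :
    Function.Surjective (rhoHom hp0 m) :=
  fun v => ⟨⟨xvec p v, xvec_mem⟩, bfun_xvec hp0 v⟩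

lemma lfun_single {m : ℕ} (c : Fin m → ZMod p) (j : Fin m) (a : ZMod p) :
    lfun c (Pi.single j a) = c j * a := by
  unfold lfun
  rw [Finset.sum_eq_single j]
  · simp
  · intro i _ hij; simp [Pi.single_eq_of_ne hij]
  · simp

lemma chi_surj [Fact p.Prime] (hp0 : (p : ℤ) ≠ 0) (m : ℕ) {c : Fin m → ZMod p} (hc : c ≠ 0) :
    Function.Surjective (chiHom hp0 m c) := by
  intro t
  obtain ⟨j, hj⟩ := Function.ne_iff.mp hc
  refine ⟨⟨xvec p (Pi.single j ((c j)⁻¹ * t)), xvec_mem⟩, ?_⟩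
  show vfun p c (xvec p (Pi.single j ((c j)⁻¹ * t))) = t
  rw [vfun_xvec hp0, lfun_single, ← mul_assoc, mul_inv_cancel₀ hj, one_mul]

lemma Sring_le_diag (hp0 : (p : ℤ) ≠ 0) (m : ℕ) (c : Fin m → ZMod p) :
    (Sring p hp0 m c).toAddSubgroup ≤ (diagSR p (m + 1)).toAddSubgroup :=
  fun _ hx => hx.1

lemma Sring_subgroupOf_eq (hp0 : (p : ℤ) ≠ 0) (m : ℕ) (c : Fin m → ZMod p) :
    (Sring p hp0 m c).toAddSubgroup.addSubgroupOf (diagSR p (m + 1)).toAddSubgroup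
      = (chiHom hp0 m c).ker := by
  ext x
  rw [AddSubgroup.mem_addSubgroupOf, AddMonoidHom.mem_ker]
  show x.1 ∈ Sring p hp0 m c ↔ _
  rw [mem_Sring]
  exact and_iff_right x.2

lemma Sring_index [Fact p.Prime] (hp : p.Prime) (hp0 : (p : ℤ) ≠ 0) (m : ℕ)
    {c : Fin m → ZMod p} (hc : c ≠ 0) :
    (Sring p hp0 m c).toAddSubgroup.index = p ^ (m + 1) := by
  have h1 := AddSubgroup.relIndex_mul_index (Sring_le_diag hp0 m c)
  rw [diagSR_index] at h1
  have h2 : (Sring p hp0 m c).toAddSubgroup.relIndex (diagSR p (m + 1)).toAddSubgroup = p := by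
    show ((Sring p hp0 m c).toAddSubgroup.addSubgroupOf _).index = p
    rw [Sring_subgroupOf_eq, index_ker_of_surj _ (chi_surj hp0 m hc), Nat.card_zmod]
  rw [h2] at h1
  rw [← h1, pow_succ, mul_comm]

end Index

section Classify

variable {p : ℕ}

lemma lfun_smul {m : ℕ} (u : ZMod p) (c v : Fin m → ZMod p) :
    lfun (u • c) v = u * lfun c v := by
  unfold lfun
  rw [Finset.mul_sum]
  exact Finset.sum_congr rfl fun i _ => by simp [mul_assoc]

lemma vfun_smul {m : ℕ} (u : ZMod p) (c : Fin m → ZMod p) (x : Fin (m + 1) → ℤ) :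
    vfun p (u • c) x = u * vfun p c x := by
  unfold vfun; rw [lfun_smul]

lemma Sring_smul (hp0 : (p : ℤ) ≠ 0) (m : ℕ) (c : Fin m → ZMod p) (u : (ZMod p)ˣ) :
    Sring p hp0 m (u • c) = Sring p hp0 m c := by
  ext x
  rw [mem_Sring, mem_Sring]
  constructor
  · rintro ⟨hd, hv⟩
    refine ⟨hd, ?_⟩
    rw [Units.smul_def, vfun_smul, Units.mul_right_eq_zero] at hv
    exact hv
  · rintro ⟨hd, hv⟩
    exact ⟨hd, by rw [Units.smul_def, vfun_smul, hv, mul_zero]⟩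

lemma lfun_sub {m : ℕ} (c v w : Fin m → ZMod p) : lfun c (v - w) = lfun c v - lfun c w := by
  unfold lfun
  rw [← Finset.sum_sub_distrib]
  exact Finset.sum_congr rfl fun i _ => by simp [mul_sub]

lemma lfun_smul_right {m : ℕ} (u : ZMod p) (c v : Fin m → ZMod p) :
    lfun c (u • v) = u * lfun c v := by
  unfold lfun
  rw [Finset.mul_sum]
  exact Finset.sum_congr rfl fun i _ => by simp; ring

lemma Sring_inj [Fact p.Prime] (hp0 : (p : ℤ) ≠ 0) (m : ℕ) {c c' : Fin m → ZMod p}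
    (hc : c ≠ 0) (hc' : c' ≠ 0) (h : Sring p hp0 m c = Sring p hp0 m c') :
    ∃ u : (ZMod p)ˣ, c' = u • c := by
  have hker : ∀ v, lfun c v = 0 ↔ lfun c' v = 0 := by
    intro v
    have h1 : xvec p v ∈ Sring p hp0 m c ↔ lfun c v = 0 := by
      rw [mem_Sring, vfun_xvec hp0]
      exact and_iff_right xvec_mem
    have h2 : xvec p v ∈ Sring p hp0 m c' ↔ lfun c' v = 0 := by
      rw [mem_Sring, vfun_xvec hp0]
      exact and_iff_right xvec_mem
    rw [← h1, ← h2, h]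
  obtain ⟨j, hj⟩ := Function.ne_iff.mp hc
  set v₀ : Fin m → ZMod p := Pi.single j (c j)⁻¹ with hv₀def
  have hv₀ : lfun c v₀ = 1 := by
    rw [hv₀def, lfun_single, mul_inv_cancel₀ hj]
  set u' := lfun c' v₀ with hu'def
  have hu' : u' ≠ 0 := by
    intro h0
    have h1 := (hker v₀).mpr h0
    rw [hv₀] at h1
    exact one_ne_zero h1
  refine ⟨Units.mk0 u' hu', ?_⟩
  funext k
  have hw : lfun c (Pi.single k 1 - (c k) • v₀) = 0 := by
    rw [lfun_sub, lfun_smul_right, lfun_single, hv₀, mul_one, sub_self]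
  have hw' := (hker _).mp hw
  rw [lfun_sub, lfun_smul_right, lfun_single, mul_one, ← hu'def, sub_eq_zero] at hw'
  rw [hw']
  simp [Units.smul_def, mul_comm]

end Classify

section Surj

variable {p : ℕ}

lemma Sring_surj [Fact p.Prime] (hp : p.Prime) (hp0 : (p : ℤ) ≠ 0) (m : ℕ)
    (S : Subring (Fin (m + 1) → ℤ))
    (hidx : S.toAddSubgroup.index = p ^ (m + 1))
    (hdiag : ∀ x ∈ S, ∀ i j : Fin (m + 1), (p : ℤ) ∣ x i - x j) :
    ∃ c : Fin m → ZMod p, c ≠ 0 ∧ S = Sring p hp0 m c := by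
  have hle : S.toAddSubgroup ≤ (diagSR p (m + 1)).toAddSubgroup := by
    intro x hx
    exact hdiag x hx
  set D := (diagSR p (m + 1)).toAddSubgroup with hD
  set H := S.toAddSubgroup.addSubgroupOf D with hHdef
  have hrel : S.toAddSubgroup.relIndex D * p ^ m = p ^ (m + 1) := by
    have h0 := AddSubgroup.relIndex_mul_index hle
    rw [hidx] at h0
    have h1 : D.index = p ^ m := diagSR_index p m
    rw [h1] at h0
    exact h0
  have hHidx : H.index = p := by
    have hpm : (0 : ℕ) < p ^ m := pow_pos hp.pos m
    have h2 : S.toAddSubgroup.relIndex D * p ^ m = p * p ^ m := by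
      rw [hrel, pow_succ, mul_comm]
    exact Nat.eq_of_mul_eq_mul_right hpm h2
  -- p-multiples of D lie in S
  have hpD : ∀ d : Fin (m + 1) → ℤ, d ∈ D → p • d ∈ S.toAddSubgroup := by
    intro d hd
    have h1 := AddSubgroup.nsmul_index_mem H (⟨d, hd⟩ : D)
    rw [hHidx] at h1
    have h2 := AddSubgroup.mem_addSubgroupOf.mp h1
    simpa using h2
  -- kernel of rho is contained in H
  set ρ := rhoHom hp0 m with hρ
  have hker : ρ.ker ≤ H := by
    rintro ⟨x, hx⟩ hxk
    rw [AddMonoidHom.mem_ker] at hxk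
    rw [hHdef, AddSubgroup.mem_addSubgroupOf]
    have hxd : ∀ i j : Fin (m + 1), (p : ℤ) ∣ x i - x j := hx
    have hx' : ∀ i, (p : ℤ) ∣ x i - x 0 := fun i => hxd i 0
    set y : Fin (m + 1) → ℤ := fun i => (x i - x 0) / p with hy
    have hy0 : ∀ i, (p : ℤ) ∣ y i := by
      intro i
      induction i using Fin.cases with
      | zero => simp [hy]
      | succ k =>
        have h3 : bfun p m x k = 0 := congrFun hxk k
        rw [bfun] at h3
        exact (ZMod.intCast_zmod_eq_zero_iff_dvd _ p).mp h3
    have hyD : y ∈ D := by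
      intro i j
      exact dvd_sub (hy0 i) (hy0 j)
    have hxeq : x = (x 0) • (1 : Fin (m + 1) → ℤ) + p • y := by
      funext i
      obtain ⟨a, ha⟩ := hx' i
      have h4 : y i = a := by rw [hy]; exact exact_div hp0 ha
      simp only [Pi.add_apply, Pi.smul_apply, Pi.one_apply, smul_eq_mul, nsmul_eq_mul,
        Pi.mul_apply, Pi.natCast_apply]
      rw [h4]
      push_cast
      linarith
    show x ∈ S.toAddSubgroup
    rw [hxeq]
    exact add_mem (AddSubgroup.zsmul_mem _ (Subring.mem_toAddSubgroup.mpr S.one_mem) _)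
      (hpD y hyD)
  -- the image subgroup
  set W := H.map ρ with hW
  have hmemW : ∀ x (hx : x ∈ D), (x ∈ S.toAddSubgroup ↔ bfun p m x ∈ W) := by
    intro x hx
    constructor
    · intro hxS
      exact ⟨⟨x, hx⟩, AddSubgroup.mem_addSubgroupOf.mpr hxS, rfl⟩
    · rintro ⟨⟨z, hz⟩, hzH, hzeq⟩
      have h1 : ((⟨x, hx⟩ : D) - ⟨z, hz⟩) ∈ ρ.ker := by
        rw [AddMonoidHom.mem_ker, map_sub, hzeq]
        show bfun p m x - bfun p m x = 0
        rw [sub_self]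
      have h2 := hker h1
      have h3 := AddSubgroup.mem_addSubgroupOf.mp h2
      have h4 := AddSubgroup.mem_addSubgroupOf.mp hzH
      have h5 := add_mem h3 h4
      simpa using h5
  have hWidx : W.index = p := by
    have h1 : W.comap ρ = H ⊔ ρ.ker := AddSubgroup.comap_map_eq ρ H
    have h2 : H ⊔ ρ.ker = H := sup_eq_left.mpr hker
    have h3 := AddSubgroup.index_comap_of_surjective W (rho_surj hp0 m)
    rw [h1, h2] at h3
    rw [← h3, hHidx]
  -- pass to submodules over ZMod p
  set W' := AddSubgroup.toZModSubmodule p W with hW'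
  have hWW' : W'.toAddSubgroup = W := AddSubgroup.toZModSubmodule_toAddSubgroup p W
  have hW'top : W' ≠ ⊤ := by
    intro htop
    have h1 : W = ⊤ := by
      rw [← hWW', htop, Submodule.top_toAddSubgroup]
    rw [h1, AddSubgroup.index_top] at hWidx
    exact hp.one_lt.ne' hWidx.symm
  obtain ⟨ℓ, hℓ0, hℓmap⟩ :=
    Submodule.exists_dual_map_eq_bot_of_lt_top (lt_top_iff_ne_top.mpr hW'top) inferInstance
  have hWle : W' ≤ LinearMap.ker ℓ := by
    intro w hw
    rw [LinearMap.mem_ker]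
    have : ℓ w ∈ W'.map ℓ := ⟨w, hw, rfl⟩
    rw [hℓmap] at this
    exact this
  have hℓsurj : Function.Surjective ℓ := by
    intro t
    have hvex : ∃ v, ℓ v ≠ 0 := by
      by_contra hall
      push_neg at hall
      exact hℓ0 (LinearMap.ext fun v => by rw [hall v]; rfl)
    obtain ⟨v, hv⟩ := hvex
    exact ⟨(t * (ℓ v)⁻¹) • v, by rw [map_smul, smul_eq_mul, mul_assoc, inv_mul_cancel₀ hv, mul_one]⟩
  have hkeridx : (LinearMap.ker ℓ).toAddSubgroup.index = p := by
    have he : (LinearMap.ker ℓ).toAddSubgroup = (ℓ.toAddMonoidHom).ker := rfl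
    rw [he, index_ker_of_surj _ hℓsurj, Nat.card_zmod]
  have hWeq : W'.toAddSubgroup = (LinearMap.ker ℓ).toAddSubgroup := by
    refine addSubgroup_eq_of_le_of_index_eq ?_ ?_ ?_
    · exact fun w hw => hWle hw
    · rw [hWW', hWidx, hkeridx]
    · rw [hkeridx]; exact hp.ne_zero
  have hmemker : ∀ v : Fin m → ZMod p, v ∈ W ↔ ℓ v = 0 := by
    intro v
    rw [← hWW', hWeq]
    exact Iff.rfl
  set c : Fin m → ZMod p := fun i => ℓ (Pi.single i 1) with hc
  have hℓc : ∀ v, ℓ v = lfun c v := by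
    intro v
    rw [LinearMap.pi_apply_eq_sum_univ ℓ v]
    refine Finset.sum_congr rfl fun i _ => ?_
    have hfs : (fun j => if i = j then (1 : ZMod p) else 0) = Pi.single i 1 := by
      funext j
      rw [Pi.single_apply]
      by_cases h : i = j
      · subst h; simp
      · rw [if_neg h, if_neg (Ne.symm h)]
    rw [smul_eq_mul, mul_comm, hfs]
  have hc0 : c ≠ 0 := by
    intro h0
    apply hℓ0
    refine LinearMap.ext fun v => ?_
    rw [hℓc v]
    unfold lfun
    rw [h0]
    simp
  refine ⟨c, hc0, ?_⟩
  ext x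
  rw [mem_Sring]
  constructor
  · intro hxS
    have hxD : x ∈ D := hle hxS
    refine ⟨hxD, ?_⟩
    have h1 : bfun p m x ∈ W := (hmemW x hxD).mp hxS
    have h2 := (hmemker _).mp h1
    rw [hℓc] at h2
    exact h2
  · rintro ⟨hxD, hv⟩
    have h1 : ℓ (bfun p m x) = 0 := by rw [hℓc]; exact hv
    exact (hmemW x hxD).mpr ((hmemker _).mpr h1)

end Surj

section Count

variable {p : ℕ}

lemma smul_free {m : ℕ} {c : Fin m → ZMod p} (hc : c ≠ 0) {u u' : (ZMod p)ˣ}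
    [Fact p.Prime] (h : u • c = u' • c) : u = u' := by
  obtain ⟨j, hj⟩ := Function.ne_iff.mp hc
  have h1 : (u : ZMod p) * c j = (u' : ZMod p) * c j := by
    have := congrFun h j
    simpa [Units.smul_def] using this
  exact Units.ext (mul_right_cancel₀ hj h1)

lemma count_T (p : ℕ) (hp : p.Prime) (m : ℕ) :
    Nat.card {S : Subring (Fin (m + 1) → ℤ) // S.toAddSubgroup.index = p ^ (m + 1) ∧
      ∀ x ∈ S, ∀ i j : Fin (m + 1), (p : ℤ) ∣ x i - x j} = (p ^ m - 1) / (p - 1) := by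
  haveI : Fact p.Prime := ⟨hp⟩
  have hp0 : (p : ℤ) ≠ 0 := by exact_mod_cast hp.ne_zero
  classical
  set T := {S : Subring (Fin (m + 1) → ℤ) // S.toAddSubgroup.index = p ^ (m + 1) ∧
      ∀ x ∈ S, ∀ i j : Fin (m + 1), (p : ℤ) ∣ x i - x j} with hT
  set A := {c : Fin m → ZMod p // c ≠ 0} with hA
  let F : A → T := fun c => ⟨Sring p hp0 m c.1, Sring_index hp hp0 m c.2,
    fun x hx i j => hx.1 i j⟩
  have hFs : Function.Surjective F := by
    rintro ⟨S, h1, h2⟩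
    obtain ⟨c, hc, hcS⟩ := Sring_surj hp hp0 m S h1 h2
    exact ⟨⟨c, hc⟩, Subtype.ext hcS.symm⟩
  set s : T → A := Function.surjInv hFs with hs
  have hsF : ∀ S, F (s S) = S := Function.surjInv_eq hFs
  have hsmul_ne : ∀ (u : (ZMod p)ˣ) (c : A), u • c.1 ≠ 0 := by
    intro u c h
    apply c.2
    have := congrArg (fun w => u⁻¹ • w) h
    simpa [smul_smul] using this
  let G : T × (ZMod p)ˣ → A := fun Su => ⟨Su.2 • (s Su.1).1, hsmul_ne _ _⟩
  have hGF : ∀ Su : T × (ZMod p)ˣ, F (G Su) = Su.1 := by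
    rintro ⟨S, u⟩
    have h1 : Sring p hp0 m (u • (s S).1) = Sring p hp0 m (s S).1 := Sring_smul hp0 m _ u
    have h2 : F (G (S, u)) = F (s S) := Subtype.ext h1
    rw [h2, hsF]
  have hGbij : Function.Bijective G := by
    constructor
    · rintro ⟨S, u⟩ ⟨S', u'⟩ hG
      have e1 : F (G (S, u)) = S := hGF (S, u)
      have e2 : F (G (S', u')) = S' := hGF (S', u')
      have h1 : S = S' := by rw [← e1, ← e2, hG]
      subst h1
      have h2 : u • (s S).1 = u' • (s S).1 := congrArg Subtype.val hG
      exact Prod.ext rfl (smul_free (s S).2 h2)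
    · intro c
      have h1 : F (s (F c)) = F c := hsF (F c)
      have h2 : Sring p hp0 m (s (F c)).1 = Sring p hp0 m c.1 :=
        congrArg Subtype.val h1
      obtain ⟨u, hu⟩ := Sring_inj hp0 m (s (F c)).2 c.2 h2
      exact ⟨(F c, u), Subtype.ext hu.symm⟩
  have hcardA : Nat.card A = p ^ m - 1 := by
    rw [Nat.card_eq_fintype_card]
    have h1 : Fintype.card A = Fintype.card (Fin m → ZMod p) - Fintype.card {c : Fin m → ZMod p // c = 0} :=
      Fintype.card_subtype_compl _
    rw [h1, Fintype.card_subtype_eq]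
    congr 1
    simp [ZMod.card]
  have hcardU : Nat.card (ZMod p)ˣ = p - 1 := by
    rw [Nat.card_eq_fintype_card, ZMod.card_units_eq_totient, Nat.totient_prime hp]
  have hkey : p ^ m - 1 = Nat.card T * (p - 1) := by
    rw [← hcardA, ← Nat.card_congr (Equiv.ofBijective G hGbij), Nat.card_prod, hcardU]
  exact (Nat.div_eq_of_eq_mul_left (by have := hp.two_le; omega : 0 < p - 1) hkey).symm

end Count


theorem g_n_small_cases (p n : ℕ) (hp : p.Prime) (hn : 1 ≤ n) :
    (∀ e : ℕ, e < n - 1 → numIrrSubrings n p e = 0) ∧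
    numIrrSubrings (n + 1) p n = 1 ∧
    numIrrSubrings n p n = (p ^ (n - 1) - 1) / (p - 1) := by
  haveI : Fact p.Prime := ⟨hp⟩
  obtain ⟨m, rfl⟩ : ∃ m, n = m + 1 := ⟨n - 1, by omega⟩
  refine ⟨?_, ?_, ?_⟩
  · intro e he
    have hem : e < m := by omega
    rw [numIrrSubrings]
    haveI : IsEmpty {S : Subring (Fin (m + 1) → ℤ) //
        S.toAddSubgroup.index = p ^ e ∧
        ∀ x ∈ S, ∀ i j : Fin (m + 1), (p : ℤ) ∣ x i - x j} := by
      constructor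
      rintro ⟨S, h1, h2⟩
      have hle : S.toAddSubgroup ≤ (diagSR p (m + 1)).toAddSubgroup := fun x hx => h2 x hx
      have hdvd := AddSubgroup.index_dvd_of_le hle
      rw [diagSR_index, h1] at hdvd
      have hcontra := (Nat.pow_dvd_pow_iff_le_right hp.one_lt).mp hdvd
      omega
    exact Nat.card_of_isEmpty
  · rw [numIrrSubrings, Nat.card_eq_one_iff_unique]
    have huniq : ∀ S : Subring (Fin (m + 1 + 1) → ℤ),
        S.toAddSubgroup.index = p ^ (m + 1) →
        (∀ x ∈ S, ∀ i j : Fin (m + 1 + 1), (p : ℤ) ∣ x i - x j) →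
        S = diagSR p (m + 1 + 1) := by
      intro S h1 h2
      have hle : S.toAddSubgroup ≤ (diagSR p (m + 1 + 1)).toAddSubgroup := fun x hx => h2 x hx
      have heq : S.toAddSubgroup = (diagSR p (m + 1 + 1)).toAddSubgroup := by
        refine addSubgroup_eq_of_le_of_index_eq hle ?_ ?_
        · rw [h1, diagSR_index]
        · rw [diagSR_index]; exact pow_ne_zero _ hp.ne_zero
      ext x
      exact SetLike.ext_iff.mp heq x
    constructor
    · constructor
      rintro ⟨S, h1, h2⟩ ⟨S', h1', h2'⟩
      exact Subtype.ext ((huniq S h1 h2).trans (huniq S' h1' h2').symm)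
    · exact ⟨⟨diagSR p (m + 1 + 1), diagSR_index p (m + 1), fun x hx i j => hx i j⟩⟩
  · rw [numIrrSubrings, Nat.add_sub_cancel]
    exact count_T p hp m
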